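/- Let q be an odd prime and m a divisor of q−1; for a prime p ≠ q let g_p be the multiplicative order of p^m modulo q. Then for every complex s with Re(s) > 1, (1−q^{−s})^{−1} · ∏_{p ≠ q} (1−p^{−s·g_p})^{−(q−1)/(m·g_p)} = ζ(s) · ∏_{χ ∈ X_m^*} L(s, χ), where ζ is the Riemann zeta function (both sides converge absolutely). -/

import Mathlib

open Filter Topology

/-- The multiplicative order `g_p` of `p^m` modulo `q`. -/
noncomputable def gp (q m p : ℕ) : ℕ := orderOf ((p : ZMod q) ^ m)

/-- The Dirichlet L-function attached to a Dirichlet character mod `q` (junk value for `q = 0`). -/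
noncomputable def Lfun {q : ℕ} (χ : DirichletCharacter ℂ q) (s : ℂ) : ℂ :=
  if h : q = 0 then 0 else
    haveI : NeZero q := ⟨h⟩
    DirichletCharacter.LFunction χ s




open Finset in
lemma aux_key_prod {w : ℂ} {g : ℕ} (hg : g ≠ 0) (hw : IsPrimitiveRoot w g) (x : ℂ) :
    ∏ a ∈ range g, (x - w ^ a) = x ^ g - 1 := by
  classical
  have hinj : Set.InjOn (w ^ ·) (range g) := fun a ha b hb hab =>
    hw.pow_inj (Finset.mem_range.mp ha) (Finset.mem_range.mp hb) hab
  have himg : Polynomial.nthRootsFinset g (1 : ℂ) = (range g).image (w ^ ·) := by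
    symm
    apply Finset.eq_of_subset_of_card_le
    · intro z hz
      simp only [Finset.mem_image, Finset.mem_range] at hz
      obtain ⟨a, ha, rfl⟩ := hz
      exact (Polynomial.mem_nthRootsFinset (Nat.pos_of_ne_zero hg) (1 : ℂ)).mpr
        (by rw [← pow_mul, mul_comm, pow_mul, hw.pow_eq_one, one_pow])
    · rw [hw.card_nthRootsFinset, Finset.card_image_of_injOn hinj, Finset.card_range]
  have := congrArg (Polynomial.eval x) (Polynomial.X_pow_sub_one_eq_prod (Nat.pos_of_ne_zero hg) hw)
  rw [himg, Finset.prod_image hinj, Polynomial.eval_sub, Polynomial.eval_pow, Polynomial.eval_X,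
    Polynomial.eval_one, Polynomial.eval_prod] at this
  simp only [Polynomial.eval_sub, Polynomial.eval_X, Polynomial.eval_C] at this
  exact this.symm

lemma aux_one_sub_prod {w : ℂ} {g : ℕ} (hg : g ≠ 0) (hw : IsPrimitiveRoot w g) (t : ℂ) :
    ∏ a ∈ Finset.range g, (1 - w ^ a * t) = 1 - t ^ g := by
  rcases eq_or_ne t 0 with rfl | ht
  · simp [hg]
  · have h1 : ∀ a ∈ Finset.range g, (1 - w ^ a * t) = t * (t⁻¹ - w ^ a) := by
      intro a _; field_simp
    rw [Finset.prod_congr rfl h1, Finset.prod_mul_distrib, Finset.prod_const,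
      Finset.card_range, aux_key_prod hg hw]
    field_simp
    rw [one_div, mul_sub, ← mul_pow, mul_inv_cancel₀ ht, one_pow, mul_one]

lemma aux_periodic_prod {w t : ℂ} {g : ℕ} (hw : w ^ g = 1) (c : ℕ) :
    ∏ j ∈ Finset.range (g * c), (1 - w ^ j * t) =
      (∏ a ∈ Finset.range g, (1 - w ^ a * t)) ^ c := by
  induction c with
  | zero => simp
  | succ c ih =>
    rw [Nat.mul_succ, Finset.prod_range_add, ih, pow_succ]
    congr 1
    refine Finset.prod_congr rfl fun a _ => ?_
    rw [pow_add, pow_mul, hw, one_pow, one_mul]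

lemma aux_prod_orderOf {w : ℂ} {n : ℕ} (hn : n ≠ 0) (hw : w ^ n = 1) (t : ℂ) :
    ∏ j ∈ Finset.range n, (1 - w ^ j * t) = (1 - t ^ orderOf w) ^ (n / orderOf w) := by
  have hfin : IsOfFinOrder w := isOfFinOrder_iff_pow_eq_one.mpr ⟨n, Nat.pos_of_ne_zero hn, hw⟩
  have hg : orderOf w ≠ 0 := hfin.orderOf_pos.ne'
  have hdvd : orderOf w ∣ n := orderOf_dvd_of_pow_eq_one hw
  have hprim : IsPrimitiveRoot w (orderOf w) := IsPrimitiveRoot.orderOf w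
  calc ∏ j ∈ Finset.range n, (1 - w ^ j * t)
      = ∏ j ∈ Finset.range (orderOf w * (n / orderOf w)), (1 - w ^ j * t) := by
        rw [Nat.mul_div_cancel' hdvd]
    _ = (∏ a ∈ Finset.range (orderOf w), (1 - w ^ a * t)) ^ (n / orderOf w) :=
        aux_periodic_prod (pow_orderOf_eq_one w) _
    _ = (1 - t ^ orderOf w) ^ (n / orderOf w) := by rw [aux_one_sub_prod hg hprim]


lemma aux_main {q m : ℕ} (hq : q.Prime) (hq_odd : q ≠ 2) (hm : m ∣ q - 1) :
    ∃ (n : ℕ) (χ₀ : DirichletCharacter ℂ q), m * n = q - 1 ∧ n ≠ 0 ∧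
      Set.InjOn (fun j => χ₀ ^ j) (Finset.range n) ∧
      (∀ χ : DirichletCharacter ℂ q,
        (∀ a : ZMod q, a ^ m = 1 → χ a = 1) ↔ ∃ j < n, χ₀ ^ j = χ) ∧
      (∀ p : ℕ, p.Prime → p ≠ q →
        ((χ₀ (p : ZMod q)) ^ n = 1 ∧ orderOf (χ₀ (p : ZMod q)) = gp q m p)) := by
  classical
  haveI : Fact q.Prime := ⟨hq⟩
  have hq2 : 2 < q := lt_of_le_of_ne hq.two_le (Ne.symm hq_odd)
  have hq1 : 2 ≤ q - 1 := by omega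
  have hm0 : m ≠ 0 := by rintro rfl; rw [zero_dvd_iff] at hm; omega
  set n := (q - 1) / m with hn_def
  have hmn : m * n = q - 1 := Nat.mul_div_cancel' hm
  have hn0 : n ≠ 0 := by rintro h; rw [h, mul_zero] at hmn; omega
  haveI : NeZero n := ⟨hn0⟩
  -- generator of (ZMod q)ˣ
  obtain ⟨γ, hγ⟩ := IsCyclic.exists_generator (α := (ZMod q)ˣ)
  have hcard : Fintype.card (ZMod q)ˣ = q - 1 := ZMod.card_units q
  have hordγ : orderOf γ = q - 1 := by
    rw [orderOf_eq_card_of_forall_mem_zpowers hγ, Nat.card_eq_fintype_card, hcard]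
  have hpow : ∀ u : (ZMod q)ˣ, ∃ k : ℕ, γ ^ k = u := by
    intro u
    simpa [Submonoid.mem_powers_iff] using (mem_powers_iff_mem_zpowers).mpr (hγ u)
  -- the primitive n-th root of unity
  set ζ : ℂ := Complex.exp (2 * Real.pi * Complex.I / n) with hζ_def
  have hζ : IsPrimitiveRoot ζ n := Complex.isPrimitiveRoot_exp n hn0
  have hζn : ζ ^ n = 1 := hζ.pow_eq_one
  have hζord : orderOf ζ = n := (hζ.eq_orderOf).symm
  have hζu : IsUnit ζ := hζ.isUnit hn0
  have hmem : hζu.unit ∈ rootsOfUnity (Fintype.card (ZMod q)ˣ) ℂ := by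
    rw [mem_rootsOfUnity, Units.ext_iff]
    push_cast
    rw [hcard, ← hmn, mul_comm, pow_mul, IsUnit.unit_spec, hζn, one_pow]
  set χ₀ : DirichletCharacter ℂ q := MulChar.ofRootOfUnity hmem hγ with hχ₀_def
  have hχ₀γ : χ₀ ↑γ = ζ := by
    rw [hχ₀_def, MulChar.ofRootOfUnity_spec, IsUnit.unit_spec]
  -- value at powers of γ
  have hval : ∀ k : ℕ, χ₀ ((γ ^ k : (ZMod q)ˣ) : ZMod q) = ζ ^ k := by
    intro k
    rw [Units.val_pow_eq_pow_val, map_pow, hχ₀γ]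
  refine ⟨n, χ₀, hmn, hn0, ?_, ?_, ?_⟩
  · -- injectivity
    intro i hi j hj hij
    simp only [Finset.coe_range, Set.mem_Iio] at hi hj
    have := congrArg (fun χ : DirichletCharacter ℂ q => χ ↑γ) hij
    simp only [MulChar.pow_apply_coe, hχ₀γ] at this
    exact hζ.pow_inj hi hj this
  · -- membership characterization
    intro χ
    constructor
    · intro hχ
      have hγn : (((γ ^ n : (ZMod q)ˣ) : ZMod q)) ^ m = 1 := by
        rw [← Units.val_pow_eq_pow_val, ← pow_mul, mul_comm n m, hmn, ← hordγ,
          pow_orderOf_eq_one, Units.val_one]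
      have hv : (χ ↑γ) ^ n = 1 := by
        rw [← map_pow, ← Units.val_pow_eq_pow_val]
        exact hχ _ hγn
      obtain ⟨j, hj, hje⟩ := hζ.eq_pow_of_pow_eq_one hv
      refine ⟨j, hj, ?_⟩
      rw [MulChar.eq_iff hγ, MulChar.pow_apply_coe, hχ₀γ, hje]
    · rintro ⟨j, hj, rfl⟩ a ha
      have ha0 : IsUnit a := by
        apply IsUnit.of_mul_eq_one (a ^ (m - 1))
        rw [← pow_succ', Nat.sub_add_cancel (Nat.one_le_iff_ne_zero.mpr hm0)]
        exact ha
      obtain ⟨k, hk⟩ := hpow ha0.unit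
      have hum : ha0.unit ^ m = 1 := by
        rw [Units.ext_iff, Units.val_pow_eq_pow_val, IsUnit.unit_spec, ha, Units.val_one]
      have hdvd : q - 1 ∣ k * m := by
        rw [← hordγ]
        apply orderOf_dvd_of_pow_eq_one
        rw [pow_mul, hk, hum]
      have hnk : n ∣ k := by
        rw [← hmn, mul_comm k m] at hdvd
        exact (Nat.mul_dvd_mul_iff_left (Nat.pos_of_ne_zero hm0)).mp hdvd
      obtain ⟨c, rfl⟩ := hnk
      have : χ₀ a = 1 := by
        rw [← ha0.unit_spec, ← hk, hval, pow_mul, hζn, one_pow]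
      rw [← ha0.unit_spec, MulChar.pow_apply_coe, ha0.unit_spec, this, one_pow]
  · -- order at primes p ≠ q
    intro p hp hpq
    have hu : IsUnit (p : ZMod q) := by
      rw [ZMod.isUnit_iff_coprime]
      exact (Nat.coprime_primes hp hq).mpr hpq
    obtain ⟨k, hk⟩ := hpow hu.unit
    have hw : χ₀ (p : ZMod q) = ζ ^ k := by
      rw [← hu.unit_spec, ← hk, hval]
    constructor
    · rw [hw, ← pow_mul, mul_comm, pow_mul, hζn, one_pow]
    · -- orderOf (ζ^k) = gp q m p
      have hζfin : IsOfFinOrder ζ :=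
        isOfFinOrder_iff_pow_eq_one.mpr ⟨n, Nat.pos_of_ne_zero hn0, hζn⟩
      have h1 : orderOf (χ₀ (p : ZMod q)) = n / Nat.gcd n k := by
        rw [hw, hζfin.orderOf_pow, hζord]
      have h2 : (p : ZMod q) ^ m = ((γ ^ (k * m) : (ZMod q)ˣ) : ZMod q) := by
        rw [pow_mul, hk, Units.val_pow_eq_pow_val, IsUnit.unit_spec]
      have h3 : gp q m p = (q - 1) / Nat.gcd (q - 1) (k * m) := by
        rw [gp, h2, orderOf_units, orderOf_pow, hordγ]
      rw [h1, h3, ← hmn, mul_comm k m, Nat.gcd_mul_left,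
        Nat.mul_div_mul_left _ _ (Nat.pos_of_ne_zero hm0)]

lemma aux_hasProd_finset_prod {β : Type*} {s : Finset β} {f : β → Nat.Primes → ℂ} {a : β → ℂ}
    (h : ∀ b ∈ s, HasProd (f b) (a b)) :
    HasProd (fun i => ∏ b ∈ s, f b i) (∏ b ∈ s, a b) := by
  classical
  induction s using Finset.induction with
  | empty => simpa using hasProd_one
  | @insert c s hb ih =>
    simp only [Finset.prod_insert hb]
    exact (h _ (Finset.mem_insert_self _ _)).mul
      (ih fun b hbs => h b (Finset.mem_insert_of_mem hbs))

/-- Euler product / L-series factorization of the Dedekind zeta function of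
`K_m`: for `q` an odd prime, `m ∣ q−1` and `Re(s) > 1`,
`(1−q^{−s})^{−1} ∏_{p ≠ q} (1−p^{−s·g_p})^{−(q−1)/(m·g_p)} = ζ(s) ∏_{χ ∈ X_m^*} L(s,χ)`,
all products converging absolutely. -/
theorem statement7 (q m : ℕ) (hq : q.Prime) (hq_odd : q ≠ 2) (hm : m ∣ q - 1)
    (s : ℂ) (hs : 1 < s.re) :
    Multipliable (fun p : Nat.Primes =>
      if (p : ℕ) = q then 1 else
        ((1 - (p : ℂ) ^ (-(s * (gp q m (p : ℕ) : ℂ))))⁻¹) ^ ((q - 1) / (m * gp q m (p : ℕ)))) ∧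
    (1 - (q : ℂ) ^ (-s))⁻¹ *
        (∏' p : Nat.Primes,
          if (p : ℕ) = q then 1 else
            ((1 - (p : ℂ) ^ (-(s * (gp q m (p : ℕ) : ℂ))))⁻¹) ^ ((q - 1) / (m * gp q m (p : ℕ)))) =
      riemannZeta s *
        ∏ᶠ χ ∈ {χ : DirichletCharacter ℂ q | χ ≠ 1 ∧ ∀ a : ZMod q, a ^ m = 1 → χ a = 1},
          Lfun χ s := by
  classical
  haveI : Fact q.Prime := ⟨hq⟩
  have hq2 : 2 < q := lt_of_le_of_ne hq.two_le (Ne.symm hq_odd)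
  obtain ⟨n, χ₀, hmn, hn0, hinj, hXiff, hprime⟩ := aux_main hq hq_odd hm
  have hm0 : m ≠ 0 := by rintro rfl; rw [zero_mul] at hmn; omega
  have hs1 : s ≠ 1 := by rintro rfl; simp at hs
  set Xfin : Finset (DirichletCharacter ℂ q) := (Finset.range n).image (χ₀ ^ ·) with hXfin
  have hmemX : ∀ χ : DirichletCharacter ℂ q,
      χ ∈ Xfin ↔ ∀ a : ZMod q, a ^ m = 1 → χ a = 1 := by
    intro χ
    rw [hXiff χ, hXfin]
    simp only [Finset.mem_image, Finset.mem_range]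
  have hL : ∀ χ : DirichletCharacter ℂ q, Lfun χ s = DirichletCharacter.LFunction χ s :=
    fun χ => dif_neg hq.ne_zero
  have hEuler : ∀ χ ∈ Xfin,
      HasProd (fun p : Nat.Primes => (1 - χ p * (p : ℂ) ^ (-s))⁻¹) (Lfun χ s) := by
    intro χ _
    rw [hL, DirichletCharacter.LFunction_eq_LSeries χ hs]
    exact DirichletCharacter.LSeries_eulerProduct_hasProd χ hs
  have hHP := aux_hasProd_finset_prod hEuler
  have hfun : (fun p : Nat.Primes => ∏ χ ∈ Xfin, (1 - χ p * (p : ℂ) ^ (-s))⁻¹) =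
      (fun p : Nat.Primes => if (p : ℕ) = q then 1 else
        ((1 - (p : ℂ) ^ (-(s * (gp q m (p : ℕ) : ℂ))))⁻¹) ^ ((q - 1) / (m * gp q m (p : ℕ)))) := by
    funext p
    by_cases hpq : (p : ℕ) = q
    · rw [if_pos hpq]
      apply Finset.prod_eq_one
      intro χ _
      have h0 : ((p : ℕ) : ZMod q) = 0 := by rw [hpq, ZMod.natCast_self]
      rw [h0, MulChar.map_nonunit χ not_isUnit_zero, zero_mul, sub_zero, inv_one]
    · rw [if_neg hpq]
      obtain ⟨hwn, hword⟩ := hprime p p.prop hpq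
      set w : ℂ := χ₀ ((p : ℕ) : ZMod q) with hw_def
      set x : ℂ := (p : ℂ) ^ (-s) with hx_def
      have hu : IsUnit (((p : ℕ)) : ZMod q) := by
        rw [ZMod.isUnit_iff_coprime]
        exact (Nat.coprime_primes p.prop hq).mpr hpq
      have hstep1 : ∏ χ ∈ Xfin, (1 - χ ((p : ℕ) : ZMod q) * x)⁻¹ =
          ∏ j ∈ Finset.range n, (1 - w ^ j * x)⁻¹ := by
        rw [hXfin, Finset.prod_image
          (fun a ha b hb hab => hinj (Finset.mem_coe.mpr ha) (Finset.mem_coe.mpr hb) hab)]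
        refine Finset.prod_congr rfl fun j _ => ?_
        rw [hw_def, ← hu.unit_spec, MulChar.pow_apply_coe]
      have hgn : orderOf w ∣ n := orderOf_dvd_of_pow_eq_one hwn
      have hg0 : orderOf w ≠ 0 :=
        (isOfFinOrder_iff_pow_eq_one.mpr ⟨n, Nat.pos_of_ne_zero hn0, hwn⟩).orderOf_pos.ne'
      have hxg : x ^ orderOf w = (p : ℂ) ^ (-(s * (gp q m (p : ℕ) : ℂ))) := by
        rw [← hword, hx_def, ← Complex.cpow_nat_mul]
        congr 1
        ring
      have hexp : (q - 1) / (m * gp q m (p : ℕ)) = n / orderOf w := by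
        rw [hword, ← hmn, Nat.mul_div_mul_left _ _ (Nat.pos_of_ne_zero hm0)]
      rw [hstep1, Finset.prod_inv_distrib, aux_prod_orderOf hn0 hwn x, hxg, hexp, inv_pow]
  rw [hfun] at hHP
  refine ⟨hHP.multipliable, ?_⟩
  rw [hHP.tprod_eq]
  -- split off the trivial character
  have h1X : (1 : DirichletCharacter ℂ q) ∈ Xfin := by
    rw [hmemX]
    intro a ha
    have ha0 : IsUnit a := by
      apply IsUnit.of_mul_eq_one (a ^ (m - 1))
      rw [← pow_succ', Nat.sub_add_cancel (Nat.one_le_iff_ne_zero.mpr hm0)]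
      exact ha
    exact MulChar.one_apply ha0
  have hset : {χ : DirichletCharacter ℂ q | χ ≠ 1 ∧ ∀ a : ZMod q, a ^ m = 1 → χ a = 1} =
      ↑(Xfin.erase 1) := by
    ext χ
    simp only [Set.mem_setOf_eq, Finset.coe_erase, Set.mem_diff, Finset.mem_coe,
      Set.mem_singleton_iff, hmemX χ]
    tauto
  rw [hset, finprod_mem_coe_finset, ← Finset.mul_prod_erase _ _ h1X]
  have hLone : Lfun (1 : DirichletCharacter ℂ q) s = (1 - (q : ℂ) ^ (-s)) * riemannZeta s := by
    rw [hL, show DirichletCharacter.LFunction (1 : DirichletCharacter ℂ q) s =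
        DirichletCharacter.LFunctionTrivChar q s from rfl,
      DirichletCharacter.LFunctionTrivChar_eq_mul_riemannZeta hs1, hq.primeFactors,
      Finset.prod_singleton]
  have hne : (1 : ℂ) - (q : ℂ) ^ (-s) ≠ 0 := by
    have habs : ‖(q : ℂ) ^ (-s)‖ < 1 := by
      rw [show ((q : ℕ) : ℂ) = ((q : ℝ) : ℂ) by push_cast; rfl,
        Complex.norm_cpow_eq_rpow_re_of_pos (by exact_mod_cast hq.pos)]
      apply Real.rpow_lt_one_of_one_lt_of_neg
      · exact_mod_cast hq.one_lt
      · rw [Complex.neg_re]; linarith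
    intro h
    have : (q : ℂ) ^ (-s) = 1 := by linear_combination -h
    rw [this] at habs
    simp at habs
  rw [hLone]
  field_simp
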